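/- (One-step mean-field LQ: optimal terminal-stage control) Consider the terminal stage of the mean-field problem: minimize over deterministic-feedback-admissible $u \in L^2(\Omega, \mathfrak{F}_N, \mathbb{R}^r)$ the quantity $\mathbf{E}[u^{\intercal} R u] + \mathbf{E}[x^{+\intercal} Q x^+] + (\mathbf{E}x^+)^{\intercal} \overline{Q}\, \mathbf{E}x^+$ where $x^+ = A x + \overline{A}\,\mathbf{E}x + B u + (C x + \overline{C}\,\mathbf{E}x + D u) w$, $x \in L^2(\Omega, \mathfrak{F}_N, \mathbb{R}^n)$ is given, and $w$ is independent of $\mathfrak{F}_N$ with $\mathbf{E}w = 0$, $\mathbf{E}w^2 = 1$. Assume $Q \geq 0$, $Q + \overline{Q} \geq 0$, $R > 0$. Then the unique minimizer is characterized by the pair of equations: $(R + B^{\intercal}QB + D^{\intercal}QD)(u - \mathbf{E}u) = -(B^{\intercal}QA + D^{\intercal}QC)(x - \mathbf{E}x)$ and $(R + B^{\intercal}(Q+\overline{Q})B + D^{\intercal}QD)\,\mathbf{E}u = -\big(B^{\intercal}(Q+\overline{Q})(A+\overline{A}) + D^{\intercal}Q(C+\overline{C})\big)\,\mathbf{E}x$.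 -/

import Mathlib

open Matrix MeasureTheory ProbabilityTheory
open scoped ENNReal NNReal
set_option linter.unusedSectionVars false
set_option maxHeartbeats 1000000

section Aux
variable {Ω : Type*} {m0 : MeasurableSpace Ω} {μ : Measure Ω}

lemma aux_integrable_mul2 {f g : Ω → ℝ} (hf : MemLp f 2 μ) (hg : MemLp g 2 μ) :
    Integrable (fun ω => f ω * g ω) μ := by
  rw [← memLp_one_iff_integrable]
  have h12 : (1:ℝ≥0∞)/1 = 1/2 + 1/2 := by
    rw [ENNReal.div_add_div_same, one_add_one_eq_two,
      ENNReal.div_self two_ne_zero ENNReal.ofNat_ne_top, div_one]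
  have h := MemLp.smul (f := f) (φ := g) (r := 1) hf hg
  have he : (g • f) = fun ω => f ω * g ω := by funext ω; simp [mul_comm]
  rwa [he] at h

lemma aux_memℒp_smul_one {k : ℕ} {f : Ω → Fin k → ℝ} {g : Ω → ℝ}
    (hf : MemLp f 2 μ) (hg : MemLp g 2 μ) : MemLp (fun ω => g ω • f ω) 1 μ := by
  have h12 : (1:ℝ≥0∞)/1 = 1/2 + 1/2 := by
    rw [ENNReal.div_add_div_same, one_add_one_eq_two,
      ENNReal.div_self two_ne_zero ENNReal.ofNat_ne_top, div_one]
  exact MemLp.smul (f := f) (φ := g) (r := 1) hf hg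

lemma aux_memℒp_apply {k : ℕ} {f : Ω → Fin k → ℝ} (hf : MemLp f 2 μ) (i : Fin k) :
    MemLp (fun ω => f ω i) 2 μ := by
  have h := (ContinuousLinearMap.proj (R := ℝ) (φ := fun _ : Fin k => ℝ) i).comp_memLp' hf
  exact h

lemma aux_integrable_dot {k : ℕ} {f g : Ω → Fin k → ℝ} (hf : MemLp f 2 μ) (hg : MemLp g 2 μ) :
    Integrable (fun ω => f ω ⬝ᵥ g ω) μ := by
  simp only [dotProduct]
  exact integrable_finset_sum _ fun i _ =>
    aux_integrable_mul2 (aux_memℒp_apply hf i) (aux_memℒp_apply hg i)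

lemma aux_memℒp_mulVec {k l : ℕ} (M : Matrix (Fin l) (Fin k) ℝ) {f : Ω → Fin k → ℝ}
    (hf : MemLp f 2 μ) : MemLp (fun ω => M.mulVec (f ω)) 2 μ := by
  have h := (LinearMap.toContinuousLinearMap (Matrix.mulVecLin M)).comp_memLp' hf
  exact h

lemma aux_integral_mulVec {k l : ℕ} (M : Matrix (Fin l) (Fin k) ℝ) {f : Ω → Fin k → ℝ}
    (hf : Integrable f μ) : ∫ ω, M.mulVec (f ω) ∂μ = M.mulVec (∫ ω, f ω ∂μ) := by
  have h := (LinearMap.toContinuousLinearMap (Matrix.mulVecLin M)).integral_comp_comm hf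
  simpa using h

lemma aux_integral_apply {k : ℕ} {f : Ω → Fin k → ℝ} (hf : Integrable f μ) (i : Fin k) :
    (∫ ω, f ω ∂μ) i = ∫ ω, f ω i ∂μ := by
  have h := (ContinuousLinearMap.proj (R := ℝ) (φ := fun _ : Fin k => ℝ) i).integral_comp_comm hf
  simpa using h.symm

lemma aux_integrable_apply {k : ℕ} {f : Ω → Fin k → ℝ} (hf : Integrable f μ) (i : Fin k) :
    Integrable (fun ω => f ω i) μ := by
  have h := (ContinuousLinearMap.proj (R := ℝ) (φ := fun _ : Fin k => ℝ) i).integrable_comp hf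
  simpa [Function.comp] using h

lemma aux_integral_dot_const {k : ℕ} {f : Ω → Fin k → ℝ} (hf : Integrable f μ) (c : Fin k → ℝ) :
    ∫ ω, f ω ⬝ᵥ c ∂μ = (∫ ω, f ω ∂μ) ⬝ᵥ c := by
  simp only [dotProduct]
  rw [integral_finset_sum _ fun i _ => (aux_integrable_apply hf i).mul_const (c i)]
  exact Finset.sum_congr rfl fun i _ => by rw [integral_mul_const, aux_integral_apply hf i]

lemma aux_integral_const_dot {k : ℕ} {f : Ω → Fin k → ℝ} (hf : Integrable f μ) (c : Fin k → ℝ) :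
    ∫ ω, c ⬝ᵥ f ω ∂μ = c ⬝ᵥ (∫ ω, f ω ∂μ) := by
  simp only [dotProduct]
  rw [integral_finset_sum _ fun i _ => (aux_integrable_apply hf i).const_mul (c i)]
  exact Finset.sum_congr rfl fun i _ => by rw [integral_const_mul, aux_integral_apply hf i]

lemma aux_meas_mulVec {m : MeasurableSpace Ω} {k l : ℕ} (M : Matrix (Fin l) (Fin k) ℝ)
    {f : Ω → Fin k → ℝ} (hf : Measurable[m] f) :
    Measurable[m] (fun ω => M.mulVec (f ω)) :=
  (LinearMap.toContinuousLinearMap (Matrix.mulVecLin M)).continuous.measurable.comp hf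

lemma aux_meas_dot {m : MeasurableSpace Ω} {k : ℕ} {f g : Ω → Fin k → ℝ}
    (hf : Measurable[m] f) (hg : Measurable[m] g) :
    Measurable[m] (fun ω => f ω ⬝ᵥ g ω) := by
  simp only [dotProduct]
  exact Finset.measurable_sum _ fun i _ =>
    ((measurable_pi_apply i).comp hf).mul ((measurable_pi_apply i).comp hg)

lemma aux_dot_symm {k : ℕ} {M : Matrix (Fin k) (Fin k) ℝ} (hM : Mᵀ = M) (x y : Fin k → ℝ) :
    x ⬝ᵥ M.mulVec y = y ⬝ᵥ M.mulVec x := by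
  rw [dotProduct_mulVec, dotProduct_comm, ← Matrix.mulVec_transpose, hM]

lemma aux_dot_trans {k l : ℕ} (M : Matrix (Fin k) (Fin l) ℝ) (x : Fin l → ℝ) (y : Fin k → ℝ) :
    x ⬝ᵥ Mᵀ.mulVec y = M.mulVec x ⬝ᵥ y := by
  rw [dotProduct_mulVec, vecMul_transpose]

/-- completion-of-square difference identity, with two symmetric middle matrices -/
lemma aux_quad_diff {nn rr : ℕ} (Q1 Q2 : Matrix (Fin nn) (Fin nn) ℝ)
    (R : Matrix (Fin rr) (Fin rr) ℝ)
    (hQ1 : Q1ᵀ = Q1) (hQ2 : Q2ᵀ = Q2) (hR : Rᵀ = R) (A C : Matrix (Fin nn) (Fin nn) ℝ)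
    (B D : Matrix (Fin nn) (Fin rr) ℝ) (a : Fin nn → ℝ) (b b' : Fin rr → ℝ) :
    (b ⬝ᵥ R *ᵥ b + ((A *ᵥ a + B *ᵥ b) ⬝ᵥ Q1 *ᵥ (A *ᵥ a + B *ᵥ b)
      + (C *ᵥ a + D *ᵥ b) ⬝ᵥ Q2 *ᵥ (C *ᵥ a + D *ᵥ b)))
    - (b' ⬝ᵥ R *ᵥ b' + ((A *ᵥ a + B *ᵥ b') ⬝ᵥ Q1 *ᵥ (A *ᵥ a + B *ᵥ b')
      + (C *ᵥ a + D *ᵥ b') ⬝ᵥ Q2 *ᵥ (C *ᵥ a + D *ᵥ b')))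
    = (b - b') ⬝ᵥ (R + Bᵀ*Q1*B + Dᵀ*Q2*D) *ᵥ (b - b')
      + 2 * ((b - b') ⬝ᵥ ((R + Bᵀ*Q1*B + Dᵀ*Q2*D) *ᵥ b' + (Bᵀ*Q1*A + Dᵀ*Q2*C) *ᵥ a)) := by
  have hsymmQ1 : ∀ x y : Fin nn → ℝ, x ⬝ᵥ Q1 *ᵥ y = y ⬝ᵥ Q1 *ᵥ x := fun x y => aux_dot_symm hQ1 x y
  have hsymmQ2 : ∀ x y : Fin nn → ℝ, x ⬝ᵥ Q2 *ᵥ y = y ⬝ᵥ Q2 *ᵥ x := fun x y => aux_dot_symm hQ2 x y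
  have hsymmR : ∀ x y : Fin rr → ℝ, x ⬝ᵥ R *ᵥ y = y ⬝ᵥ R *ᵥ x := fun x y => aux_dot_symm hR x y
  simp only [Matrix.add_mulVec, ← Matrix.mulVec_mulVec, dotProduct_add, add_dotProduct,
    Matrix.mulVec_add, Matrix.mulVec_sub, sub_dotProduct, dotProduct_sub, aux_dot_trans]
  simp only [hsymmQ1, hsymmQ2, hsymmR]
  ring

end Aux

section Aux2
variable {Ω : Type*} {m0 : MeasurableSpace Ω} {μ : Measure Ω} [IsProbabilityMeasure μ]

lemma aux_expand_mean {k : ℕ} (M : Matrix (Fin k) (Fin k) ℝ) {g : Ω → Fin k → ℝ}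
    (hg2 : MemLp g 2 μ) (hgmean : ∫ ω, g ω ∂μ = 0) (c : Fin k → ℝ) :
    ∫ ω, (g ω + c) ⬝ᵥ M *ᵥ (g ω + c) ∂μ = (∫ ω, g ω ⬝ᵥ M *ᵥ g ω ∂μ) + c ⬝ᵥ M *ᵥ c := by
  have hgI : Integrable g μ := hg2.integrable one_le_two
  have i1 : Integrable (fun ω => g ω ⬝ᵥ M *ᵥ g ω) μ :=
    aux_integrable_dot hg2 (aux_memℒp_mulVec M hg2)
  have i2 : Integrable (fun ω => g ω ⬝ᵥ M *ᵥ c) μ := aux_integrable_dot hg2 (memLp_const _)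
  have i3 : Integrable (fun ω => c ⬝ᵥ M *ᵥ g ω) μ :=
    aux_integrable_dot (memLp_const _) (aux_memℒp_mulVec M hg2)
  have i4 : Integrable (fun _ : Ω => c ⬝ᵥ M *ᵥ c) μ := integrable_const _
  have hpt : ∀ ω, (g ω + c) ⬝ᵥ M *ᵥ (g ω + c)
      = g ω ⬝ᵥ M *ᵥ g ω + (g ω ⬝ᵥ M *ᵥ c + (c ⬝ᵥ M *ᵥ g ω + c ⬝ᵥ M *ᵥ c)) := by
    intro ω
    simp only [Matrix.mulVec_add, dotProduct_add, add_dotProduct]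
    ring
  have i34 : Integrable (fun ω => c ⬝ᵥ M *ᵥ g ω + c ⬝ᵥ M *ᵥ c) μ := i3.add i4
  have i234 : Integrable (fun ω => g ω ⬝ᵥ M *ᵥ c + (c ⬝ᵥ M *ᵥ g ω + c ⬝ᵥ M *ᵥ c)) μ := i2.add i34
  simp only [hpt]
  rw [integral_add i1 i234, integral_add i2 i34, integral_add i3 i4,
    aux_integral_dot_const hgI, hgmean, zero_dotProduct]
  have h3 : ∫ ω, c ⬝ᵥ M *ᵥ g ω ∂μ = 0 := by
    rw [aux_integral_const_dot ((aux_memℒp_mulVec M hg2).integrable one_le_two) c,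
      aux_integral_mulVec M hgI, hgmean, Matrix.mulVec_zero, dotProduct_zero]
  rw [h3, integral_const, probReal_univ, one_smul]
  ring

end Aux2

section Aux3
variable {Ω : Type*} {m0 : MeasurableSpace Ω} {μ : Measure Ω} [IsProbabilityMeasure μ]
  {m : MeasurableSpace Ω}

lemma aux_indep_w {w : Ω → ℝ}
    (hwindep : Indep (MeasurableSpace.comap w inferInstance) m μ)
    {g : Ω → ℝ} (hg : Measurable[m] g) : IndepFun w g μ :=
  indep_of_indep_of_le_right hwindep (measurable_iff_comap_le.mp hg)

lemma aux_indep_wsq {w : Ω → ℝ}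
    (hwindep : Indep (MeasurableSpace.comap w inferInstance) m μ)
    {g : Ω → ℝ} (hg : Measurable[m] g) : IndepFun (fun ω => w ω ^ 2) g μ := by
  have hw : Measurable[MeasurableSpace.comap w inferInstance] w :=
    Measurable.of_comap_le le_rfl
  exact indep_of_indep_of_le_right
    (indep_of_indep_of_le_left hwindep (measurable_iff_comap_le.mp (hw.pow_const 2)))
    (measurable_iff_comap_le.mp hg)

lemma aux_integral_w_mul {w : Ω → ℝ} (hw2 : MemLp w 2 μ)
    (hwindep : Indep (MeasurableSpace.comap w inferInstance) m μ)
    (hwmean : ∫ ω, w ω ∂μ = 0)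
    {g : Ω → ℝ} (hg : Measurable[m] g) (hgi : Integrable g μ) :
    (∫ ω, w ω * g ω ∂μ = 0) ∧ Integrable (fun ω => w ω * g ω) μ := by
  have hind := aux_indep_w hwindep hg
  have hwi : Integrable w μ := hw2.integrable one_le_two
  refine ⟨?_, hind.integrable_mul hwi hgi⟩
  have h := hind.integral_mul_eq_mul_integral hwi.aestronglyMeasurable hgi.aestronglyMeasurable
  calc ∫ ω, w ω * g ω ∂μ = ∫ ω, (w * g) ω ∂μ := rfl
    _ = 0 := by rw [h, hwmean, zero_mul]

lemma aux_integral_wsq_mul {w : Ω → ℝ} (hw2 : MemLp w 2 μ)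
    (hwindep : Indep (MeasurableSpace.comap w inferInstance) m μ)
    (hwvar : ∫ ω, (w ω) ^ 2 ∂μ = 1)
    {g : Ω → ℝ} (hg : Measurable[m] g) (hgi : Integrable g μ) :
    (∫ ω, w ω ^ 2 * g ω ∂μ = ∫ ω, g ω ∂μ) ∧ Integrable (fun ω => w ω ^ 2 * g ω) μ := by
  have hind := aux_indep_wsq hwindep hg
  have hwi : Integrable (fun ω => w ω ^ 2) μ := hw2.integrable_sq
  refine ⟨?_, hind.integrable_mul hwi hgi⟩
  have h := hind.integral_mul_eq_mul_integral hwi.aestronglyMeasurable hgi.aestronglyMeasurable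
  calc ∫ ω, w ω ^ 2 * g ω ∂μ = ∫ ω, ((fun ω => w ω ^ 2) * g) ω ∂μ := rfl
    _ = ∫ ω, g ω ∂μ := by rw [h, hwvar, one_mul]

end Aux3

section AuxKey
variable {Ω : Type*} {m0 : MeasurableSpace Ω} {μ : Measure Ω} [IsProbabilityMeasure μ]
  {m : MeasurableSpace Ω}

lemma aux_key {nn rr : ℕ}
    (A Abar C Cbar Q Qbar : Matrix (Fin nn) (Fin nn) ℝ)
    (B D : Matrix (Fin nn) (Fin rr) ℝ) (R : Matrix (Fin rr) (Fin rr) ℝ)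
    {w : Ω → ℝ} (hw2 : MemLp w 2 μ)
    (hwindep : Indep (MeasurableSpace.comap w inferInstance) m μ)
    (hwmean : ∫ ω, w ω ∂μ = 0) (hwvar : ∫ ω, (w ω) ^ 2 ∂μ = 1)
    {x : Ω → Fin nn → ℝ} (hxmeas : Measurable[m] x) (hx2 : MemLp x 2 μ)
    {v : Ω → Fin rr → ℝ} (hvmeas : Measurable[m] v) (hv2 : MemLp v 2 μ)
    (xp : Ω → Fin nn → ℝ)
    (hxp : ∀ ω, xp ω = A.mulVec (x ω) + Abar.mulVec (∫ ω', x ω' ∂μ) + B.mulVec (v ω)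
        + w ω • (C.mulVec (x ω) + Cbar.mulVec (∫ ω', x ω' ∂μ) + D.mulVec (v ω))) :
    (∫ ω, v ω ⬝ᵥ R.mulVec (v ω) ∂μ) + (∫ ω, xp ω ⬝ᵥ Q.mulVec (xp ω) ∂μ)
      + (∫ ω, xp ω ∂μ) ⬝ᵥ Qbar.mulVec (∫ ω, xp ω ∂μ)
    = (∫ ω, ((v ω - ∫ ω', v ω' ∂μ) ⬝ᵥ R *ᵥ (v ω - ∫ ω', v ω' ∂μ)
        + ((A *ᵥ (x ω - ∫ ω', x ω' ∂μ) + B *ᵥ (v ω - ∫ ω', v ω' ∂μ)) ⬝ᵥ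
            Q *ᵥ (A *ᵥ (x ω - ∫ ω', x ω' ∂μ) + B *ᵥ (v ω - ∫ ω', v ω' ∂μ))
          + (C *ᵥ (x ω - ∫ ω', x ω' ∂μ) + D *ᵥ (v ω - ∫ ω', v ω' ∂μ)) ⬝ᵥ
            Q *ᵥ (C *ᵥ (x ω - ∫ ω', x ω' ∂μ) + D *ᵥ (v ω - ∫ ω', v ω' ∂μ)))) ∂μ)
      + ((∫ ω', v ω' ∂μ) ⬝ᵥ R *ᵥ (∫ ω', v ω' ∂μ)
        + (((A+Abar) *ᵥ (∫ ω', x ω' ∂μ) + B *ᵥ (∫ ω', v ω' ∂μ)) ⬝ᵥ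
            (Q+Qbar) *ᵥ ((A+Abar) *ᵥ (∫ ω', x ω' ∂μ) + B *ᵥ (∫ ω', v ω' ∂μ))
          + ((C+Cbar) *ᵥ (∫ ω', x ω' ∂μ) + D *ᵥ (∫ ω', v ω' ∂μ)) ⬝ᵥ
            Q *ᵥ ((C+Cbar) *ᵥ (∫ ω', x ω' ∂μ) + D *ᵥ (∫ ω', v ω' ∂μ)))) := by
  set X := ∫ ω', x ω' ∂μ with hX
  set vb := ∫ ω', v ω' ∂μ with hvb
  set Mv := (A+Abar) *ᵥ X + B *ᵥ vb with hMv
  set Nv := (C+Cbar) *ᵥ X + D *ᵥ vb with hNv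
  have hxI : Integrable x μ := hx2.integrable one_le_two
  have hvI : Integrable v μ := hv2.integrable one_le_two
  have hconstint : ∀ {k : ℕ} (c : Fin k → ℝ), ∫ (_ : Ω), c ∂μ = c := by
    intro k c; rw [integral_const, probReal_univ, one_smul]
  have hbmean : ∫ ω, (v ω - vb) ∂μ = 0 := by
    rw [integral_sub hvI (integrable_const vb), hconstint, ← hvb, sub_self]
  have hamean : ∫ ω, (x ω - X) ∂μ = 0 := by
    rw [integral_sub hxI (integrable_const X), hconstint, ← hX, sub_self]
  have hb2 : MemLp (fun ω => v ω - vb) 2 μ := hv2.sub (memLp_const vb)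
  have ha2 : MemLp (fun ω => x ω - X) 2 μ := hx2.sub (memLp_const X)
  -- part 1 : control cost
  have H1 : ∫ ω, v ω ⬝ᵥ R.mulVec (v ω) ∂μ
      = (∫ ω, (v ω - vb) ⬝ᵥ R *ᵥ (v ω - vb) ∂μ) + vb ⬝ᵥ R *ᵥ vb := by
    have e : ∀ ω : Ω, v ω ⬝ᵥ R.mulVec (v ω) = ((v ω - vb) + vb) ⬝ᵥ R *ᵥ ((v ω - vb) + vb) := by
      intro ω; rw [sub_add_cancel]
    calc ∫ ω, v ω ⬝ᵥ R.mulVec (v ω) ∂μ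
        = ∫ ω, ((v ω - vb) + vb) ⬝ᵥ R *ᵥ ((v ω - vb) + vb) ∂μ := by simp only [e]
      _ = _ := aux_expand_mean R hb2 hbmean vb
  -- the deterministic and stochastic parts of the state
  set p : Ω → Fin nn → ℝ := fun ω => A *ᵥ x ω + Abar *ᵥ X + B *ᵥ v ω with hp
  set q : Ω → Fin nn → ℝ := fun ω => C *ᵥ x ω + Cbar *ᵥ X + D *ᵥ v ω with hq
  have hpm : Measurable[m] p :=
    ((aux_meas_mulVec A hxmeas).add measurable_const).add (aux_meas_mulVec B hvmeas)
  have hqm : Measurable[m] q :=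
    ((aux_meas_mulVec C hxmeas).add measurable_const).add (aux_meas_mulVec D hvmeas)
  have hp2 : MemLp p 2 μ :=
    ((aux_memℒp_mulVec A hx2).add (memLp_const _)).add (aux_memℒp_mulVec B hv2)
  have hq2 : MemLp q 2 μ :=
    ((aux_memℒp_mulVec C hx2).add (memLp_const _)).add (aux_memℒp_mulVec D hv2)
  have hpI : Integrable p μ := hp2.integrable one_le_two
  have hxpd : ∀ ω, xp ω = p ω + w ω • q ω := by
    intro ω; rw [hxp ω]
  -- step B : second moment of the state splits into p and q parts
  have im1 : Measurable[m] (fun ω => p ω ⬝ᵥ Q *ᵥ q ω) := aux_meas_dot hpm (aux_meas_mulVec Q hqm)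
  have im2 : Measurable[m] (fun ω => q ω ⬝ᵥ Q *ᵥ p ω) := aux_meas_dot hqm (aux_meas_mulVec Q hpm)
  have im3 : Measurable[m] (fun ω => q ω ⬝ᵥ Q *ᵥ q ω) := aux_meas_dot hqm (aux_meas_mulVec Q hqm)
  have ii1 : Integrable (fun ω => p ω ⬝ᵥ Q *ᵥ q ω) μ :=
    aux_integrable_dot hp2 (aux_memℒp_mulVec Q hq2)
  have ii2 : Integrable (fun ω => q ω ⬝ᵥ Q *ᵥ p ω) μ :=
    aux_integrable_dot hq2 (aux_memℒp_mulVec Q hp2)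
  have ii3 : Integrable (fun ω => q ω ⬝ᵥ Q *ᵥ q ω) μ :=
    aux_integrable_dot hq2 (aux_memℒp_mulVec Q hq2)
  have ii0 : Integrable (fun ω => p ω ⬝ᵥ Q *ᵥ p ω) μ :=
    aux_integrable_dot hp2 (aux_memℒp_mulVec Q hp2)
  obtain ⟨ev1, iv1⟩ := aux_integral_w_mul hw2 hwindep hwmean im1 ii1
  obtain ⟨ev2, iv2⟩ := aux_integral_w_mul hw2 hwindep hwmean im2 ii2
  obtain ⟨ev3, iv3⟩ := aux_integral_wsq_mul hw2 hwindep hwvar im3 ii3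
  have hptw : ∀ ω, xp ω ⬝ᵥ Q.mulVec (xp ω)
      = p ω ⬝ᵥ Q *ᵥ p ω + (w ω * (p ω ⬝ᵥ Q *ᵥ q ω)
        + (w ω * (q ω ⬝ᵥ Q *ᵥ p ω) + w ω ^ 2 * (q ω ⬝ᵥ Q *ᵥ q ω))) := by
    intro ω; rw [hxpd ω]
    simp only [Matrix.mulVec_add, Matrix.mulVec_smul, dotProduct_add, add_dotProduct,
      dotProduct_smul, smul_dotProduct, smul_eq_mul]
    ring
  have i23 : Integrable (fun ω => w ω * (q ω ⬝ᵥ Q *ᵥ p ω) + w ω ^ 2 * (q ω ⬝ᵥ Q *ᵥ q ω)) μ :=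
    iv2.add iv3
  have i123 : Integrable (fun ω => w ω * (p ω ⬝ᵥ Q *ᵥ q ω)
      + (w ω * (q ω ⬝ᵥ Q *ᵥ p ω) + w ω ^ 2 * (q ω ⬝ᵥ Q *ᵥ q ω))) μ := iv1.add i23
  have HB : ∫ ω, xp ω ⬝ᵥ Q.mulVec (xp ω) ∂μ
      = (∫ ω, p ω ⬝ᵥ Q *ᵥ p ω ∂μ) + ∫ ω, q ω ⬝ᵥ Q *ᵥ q ω ∂μ := by
    simp only [hptw]
    rw [integral_add ii0 i123, integral_add iv1 i23, integral_add iv2 iv3, ev1, ev2, ev3]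
    ring
  -- step C : mean split for p and q
  have hg2 : MemLp (fun ω => A *ᵥ (x ω - X) + B *ᵥ (v ω - vb)) 2 μ :=
    (aux_memℒp_mulVec A ha2).add (aux_memℒp_mulVec B hb2)
  have hh2 : MemLp (fun ω => C *ᵥ (x ω - X) + D *ᵥ (v ω - vb)) 2 μ :=
    (aux_memℒp_mulVec C ha2).add (aux_memℒp_mulVec D hb2)
  have haI : Integrable (fun ω => x ω - X) μ := ha2.integrable one_le_two
  have hbI : Integrable (fun ω => v ω - vb) μ := hb2.integrable one_le_two
  have hgmean : ∫ ω, (A *ᵥ (x ω - X) + B *ᵥ (v ω - vb)) ∂μ = 0 := by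
    rw [integral_add ((aux_memℒp_mulVec A ha2).integrable one_le_two)
        ((aux_memℒp_mulVec B hb2).integrable one_le_two),
      aux_integral_mulVec A haI, aux_integral_mulVec B hbI, hamean, hbmean,
      Matrix.mulVec_zero, Matrix.mulVec_zero, add_zero]
  have hhmean : ∫ ω, (C *ᵥ (x ω - X) + D *ᵥ (v ω - vb)) ∂μ = 0 := by
    rw [integral_add ((aux_memℒp_mulVec C ha2).integrable one_le_two)
        ((aux_memℒp_mulVec D hb2).integrable one_le_two),
      aux_integral_mulVec C haI, aux_integral_mulVec D hbI, hamean, hbmean,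
      Matrix.mulVec_zero, Matrix.mulVec_zero, add_zero]
  have hpdec : ∀ ω, p ω = (A *ᵥ (x ω - X) + B *ᵥ (v ω - vb)) + Mv := by
    intro ω
    rw [hp, hMv]
    simp only [Matrix.mulVec_sub, Matrix.add_mulVec]
    abel
  have hqdec : ∀ ω, q ω = (C *ᵥ (x ω - X) + D *ᵥ (v ω - vb)) + Nv := by
    intro ω
    rw [hq, hNv]
    simp only [Matrix.mulVec_sub, Matrix.add_mulVec]
    abel
  have HC : ∫ ω, p ω ⬝ᵥ Q *ᵥ p ω ∂μ
      = (∫ ω, (A *ᵥ (x ω - X) + B *ᵥ (v ω - vb)) ⬝ᵥ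
          Q *ᵥ (A *ᵥ (x ω - X) + B *ᵥ (v ω - vb)) ∂μ) + Mv ⬝ᵥ Q *ᵥ Mv := by
    calc ∫ ω, p ω ⬝ᵥ Q *ᵥ p ω ∂μ
        = ∫ ω, ((A *ᵥ (x ω - X) + B *ᵥ (v ω - vb)) + Mv) ⬝ᵥ
            Q *ᵥ ((A *ᵥ (x ω - X) + B *ᵥ (v ω - vb)) + Mv) ∂μ := by simp only [← hpdec]
      _ = _ := aux_expand_mean Q hg2 hgmean Mv
  have HD : ∫ ω, q ω ⬝ᵥ Q *ᵥ q ω ∂μ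
      = (∫ ω, (C *ᵥ (x ω - X) + D *ᵥ (v ω - vb)) ⬝ᵥ
          Q *ᵥ (C *ᵥ (x ω - X) + D *ᵥ (v ω - vb)) ∂μ) + Nv ⬝ᵥ Q *ᵥ Nv := by
    calc ∫ ω, q ω ⬝ᵥ Q *ᵥ q ω ∂μ
        = ∫ ω, ((C *ᵥ (x ω - X) + D *ᵥ (v ω - vb)) + Nv) ⬝ᵥ
            Q *ᵥ ((C *ᵥ (x ω - X) + D *ᵥ (v ω - vb)) + Nv) ∂μ := by simp only [← hqdec]
      _ = _ := aux_expand_mean Q hh2 hhmean Nv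
  -- step A : mean of the state
  have hwq1 : Integrable (fun ω => w ω • q ω) μ :=
    memLp_one_iff_integrable.mp (aux_memℒp_smul_one hq2 hw2)
  have hwqmean : ∫ ω, w ω • q ω ∂μ = (0 : Fin nn → ℝ) := by
    funext i
    rw [aux_integral_apply hwq1 i]
    have hqi : Measurable[m] (fun ω => q ω i) := (measurable_pi_apply i).comp hqm
    have hqii : Integrable (fun ω => q ω i) μ := aux_integrable_apply (hq2.integrable one_le_two) i
    obtain ⟨e, _⟩ := aux_integral_w_mul hw2 hwindep hwmean hqi hqii
    simpa [Pi.smul_apply, smul_eq_mul] using e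
  have HA : ∫ ω, xp ω ∂μ = Mv := by
    have h1 : Integrable (fun ω => A *ᵥ x ω + Abar *ᵥ X) μ :=
      ((aux_memℒp_mulVec A hx2).integrable one_le_two).add (integrable_const _)
    have h2 : Integrable (fun ω => B *ᵥ v ω) μ := (aux_memℒp_mulVec B hv2).integrable one_le_two
    calc ∫ ω, xp ω ∂μ = ∫ ω, (p ω + w ω • q ω) ∂μ := by simp only [hxpd]
      _ = (∫ ω, p ω ∂μ) + ∫ ω, w ω • q ω ∂μ := integral_add hpI hwq1
      _ = ∫ ω, p ω ∂μ := by rw [hwqmean, add_zero]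
      _ = (∫ ω, (A *ᵥ x ω + Abar *ᵥ X) ∂μ) + ∫ ω, B *ᵥ v ω ∂μ := by
          rw [hp]; exact integral_add h1 h2
      _ = Mv := by
          rw [integral_add ((aux_memℒp_mulVec A hx2).integrable one_le_two) (integrable_const _),
            aux_integral_mulVec A hxI, aux_integral_mulVec B hvI, hconstint, hMv, ← hX, ← hvb,
            Matrix.add_mulVec]
  -- assemble
  have iB : Integrable (fun ω => (v ω - vb) ⬝ᵥ R *ᵥ (v ω - vb)) μ :=
    aux_integrable_dot hb2 (aux_memℒp_mulVec R hb2)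
  have iG : Integrable (fun ω => (A *ᵥ (x ω - X) + B *ᵥ (v ω - vb)) ⬝ᵥ
      Q *ᵥ (A *ᵥ (x ω - X) + B *ᵥ (v ω - vb))) μ :=
    aux_integrable_dot hg2 (aux_memℒp_mulVec Q hg2)
  have iH : Integrable (fun ω => (C *ᵥ (x ω - X) + D *ᵥ (v ω - vb)) ⬝ᵥ
      Q *ᵥ (C *ᵥ (x ω - X) + D *ᵥ (v ω - vb))) μ :=
    aux_integrable_dot hh2 (aux_memℒp_mulVec Q hh2)
  have iGH : Integrable (fun ω => (A *ᵥ (x ω - X) + B *ᵥ (v ω - vb)) ⬝ᵥ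
      Q *ᵥ (A *ᵥ (x ω - X) + B *ᵥ (v ω - vb))
      + (C *ᵥ (x ω - X) + D *ᵥ (v ω - vb)) ⬝ᵥ
      Q *ᵥ (C *ᵥ (x ω - X) + D *ᵥ (v ω - vb))) μ := iG.add iH
  rw [H1, HB, HC, HD, HA, integral_add iB iGH, integral_add iG iH]
  simp only [Matrix.add_mulVec, dotProduct_add]
  ring
end AuxKey

/-- One-step mean-field LQ problem: the unique optimal terminal-stage control
is characterized by the decoupled pair of equations for its fluctuation and mean parts. -/
theorem stmt_19 {Ω : Type*} [m0 : MeasurableSpace Ω] (μ : Measure Ω) [IsProbabilityMeasure μ]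
    {n r : ℕ} (m : MeasurableSpace Ω) (hm : m ≤ m0)
    (A Abar C Cbar Q Qbar : Matrix (Fin n) (Fin n) ℝ)
    (B D : Matrix (Fin n) (Fin r) ℝ) (R : Matrix (Fin r) (Fin r) ℝ)
    (hQ : Q.PosSemidef) (hQQbar : (Q + Qbar).PosSemidef) (hR : R.PosDef)
    (w : Ω → ℝ) (hw2 : MemLp w 2 μ)
    (hwindep : Indep (MeasurableSpace.comap w inferInstance) m μ)
    (hwmean : ∫ ω, w ω ∂μ = 0) (hwvar : ∫ ω, (w ω) ^ 2 ∂μ = 1)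
    (x : Ω → Fin n → ℝ) (hxmeas : Measurable[m] x) (hx2 : MemLp x 2 μ)
    -- admissible controls: `m`-measurable and square integrable
    (Adm : (Ω → Fin r → ℝ) → Prop)
    (hAdm : ∀ v, Adm v ↔ (Measurable[m] v ∧ MemLp v 2 μ))
    -- the next state generated by a control
    (xplus : (Ω → Fin r → ℝ) → Ω → Fin n → ℝ)
    (hxplus : ∀ v ω, xplus v ω = A.mulVec (x ω) + Abar.mulVec (∫ ω', x ω' ∂μ)
        + B.mulVec (v ω)
        + w ω • (C.mulVec (x ω) + Cbar.mulVec (∫ ω', x ω' ∂μ) + D.mulVec (v ω)))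
    -- the one-step cost
    (cost : (Ω → Fin r → ℝ) → ℝ)
    (hcost : ∀ v, cost v = (∫ ω, v ω ⬝ᵥ R.mulVec (v ω) ∂μ)
        + (∫ ω, xplus v ω ⬝ᵥ Q.mulVec (xplus v ω) ∂μ)
        + (∫ ω, xplus v ω ∂μ) ⬝ᵥ Qbar.mulVec (∫ ω, xplus v ω ∂μ))
    (u : Ω → Fin r → ℝ) (hu : Adm u) :
    (∀ v, Adm v → cost u ≤ cost v) ↔
      ((∀ᵐ ω ∂μ,
          (R + Bᵀ * Q * B + Dᵀ * Q * D).mulVec (u ω - ∫ ω', u ω' ∂μ)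
            = -((Bᵀ * Q * A + Dᵀ * Q * C).mulVec (x ω - ∫ ω', x ω' ∂μ))) ∧
       (R + Bᵀ * (Q + Qbar) * B + Dᵀ * Q * D).mulVec (∫ ω', u ω' ∂μ)
          = -((Bᵀ * (Q + Qbar) * (A + Abar) + Dᵀ * Q * (C + Cbar)).mulVec
              (∫ ω', x ω' ∂μ))) := by
  obtain ⟨hum, hu2⟩ := (hAdm u).mp hu
  -- symmetry facts
  have hQsym : Qᵀ = Q := by
    have h := hQ.1; rwa [Matrix.IsHermitian, Matrix.conjTranspose_eq_transpose_of_trivial] at h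
  have hQQsym : (Q + Qbar)ᵀ = Q + Qbar := by
    have h := hQQbar.1
    rwa [Matrix.IsHermitian, Matrix.conjTranspose_eq_transpose_of_trivial] at h
  have hRsym : Rᵀ = R := by
    have h := hR.1; rwa [Matrix.IsHermitian, Matrix.conjTranspose_eq_transpose_of_trivial] at h
  -- abbreviations
  set X := ∫ ω', x ω' ∂μ with hXdef
  set S := R + Bᵀ * Q * B + Dᵀ * Q * D with hSdef
  set Sb := R + Bᵀ * (Q + Qbar) * B + Dᵀ * Q * D with hSbdef
  set K := Bᵀ * Q * A + Dᵀ * Q * C with hKdef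
  set Kb := Bᵀ * (Q + Qbar) * (A + Abar) + Dᵀ * Q * (C + Cbar) with hKbdef
  -- positive definiteness
  have hBQB : (Bᵀ * Q * B).PosSemidef := by
    have h := hQ.conjTranspose_mul_mul_same B
    rwa [Matrix.conjTranspose_eq_transpose_of_trivial] at h
  have hDQD : (Dᵀ * Q * D).PosSemidef := by
    have h := hQ.conjTranspose_mul_mul_same D
    rwa [Matrix.conjTranspose_eq_transpose_of_trivial] at h
  have hBQQB : (Bᵀ * (Q + Qbar) * B).PosSemidef := by
    have h := hQQbar.conjTranspose_mul_mul_same B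
    rwa [Matrix.conjTranspose_eq_transpose_of_trivial] at h
  have hS : S.PosDef := (hR.add_posSemidef hBQB).add_posSemidef hDQD
  have hSb : Sb.PosDef := (hR.add_posSemidef hBQQB).add_posSemidef hDQD
  have hSsym : Sᵀ = S := by
    have h := hS.1; rwa [Matrix.IsHermitian, Matrix.conjTranspose_eq_transpose_of_trivial] at h
  have hSbsym : Sbᵀ = Sb := by
    have h := hSb.1; rwa [Matrix.IsHermitian, Matrix.conjTranspose_eq_transpose_of_trivial] at h
  have hSdet : IsUnit S.det := isUnit_iff_ne_zero.mpr hS.det_pos.ne'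
  have hSbdet : IsUnit Sb.det := isUnit_iff_ne_zero.mpr hSb.det_pos.ne'
  have hquadS : ∀ y : Fin r → ℝ, 0 ≤ y ⬝ᵥ S *ᵥ y := by
    intro y; have h := hS.posSemidef.dotProduct_mulVec_nonneg y; simpa using h
  have hquadSb : ∀ y : Fin r → ℝ, 0 ≤ y ⬝ᵥ Sb *ᵥ y := by
    intro y; have h := hSb.posSemidef.dotProduct_mulVec_nonneg y; simpa using h
  have hquadSzero : ∀ y : Fin r → ℝ, y ⬝ᵥ S *ᵥ y = 0 → y = 0 := by
    intro y hy
    by_contra hne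
    have h := hS.dotProduct_mulVec_pos hne
    simp only [star_trivial] at h
    rw [hy] at h; exact lt_irrefl 0 h
  have hquadSbzero : ∀ y : Fin r → ℝ, y ⬝ᵥ Sb *ᵥ y = 0 → y = 0 := by
    intro y hy
    by_contra hne
    have h := hSb.dotProduct_mulVec_pos hne
    simp only [star_trivial] at h
    rw [hy] at h; exact lt_irrefl 0 h
  -- basics
  have hxI : Integrable x μ := hx2.integrable one_le_two
  have hconstint : ∀ {k : ℕ} (c : Fin k → ℝ), ∫ (_ : Ω), c ∂μ = c := by
    intro k c; rw [integral_const, probReal_univ, one_smul]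
  have ha2 : MemLp (fun ω => x ω - X) 2 μ := hx2.sub (memLp_const X)
  have haI : Integrable (fun ω => x ω - X) μ := ha2.integrable one_le_two
  have hamean : ∫ ω, (x ω - X) ∂μ = 0 := by
    rw [integral_sub hxI (integrable_const X), hconstint, ← hXdef, sub_self]
  have ham : Measurable[m] (fun ω => x ω - X) := hxmeas.sub measurable_const
  -- integrability of the fluctuation cost integrand
  have intPhi : ∀ (v' : Ω → Fin r → ℝ), MemLp v' 2 μ → Integrable (fun ω =>
      ((v' ω - ∫ ω', v' ω' ∂μ) ⬝ᵥ R *ᵥ (v' ω - ∫ ω', v' ω' ∂μ)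
        + ((A *ᵥ (x ω - X) + B *ᵥ (v' ω - ∫ ω', v' ω' ∂μ)) ⬝ᵥ
            Q *ᵥ (A *ᵥ (x ω - X) + B *ᵥ (v' ω - ∫ ω', v' ω' ∂μ))
          + (C *ᵥ (x ω - X) + D *ᵥ (v' ω - ∫ ω', v' ω' ∂μ)) ⬝ᵥ
            Q *ᵥ (C *ᵥ (x ω - X) + D *ᵥ (v' ω - ∫ ω', v' ω' ∂μ))))) μ := by
    intro v' hv'2
    have hb2 : MemLp (fun ω => v' ω - ∫ ω', v' ω' ∂μ) 2 μ := hv'2.sub (memLp_const _)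
    have hg2 : MemLp (fun ω => A *ᵥ (x ω - X) + B *ᵥ (v' ω - ∫ ω', v' ω' ∂μ)) 2 μ :=
      (aux_memℒp_mulVec A ha2).add (aux_memℒp_mulVec B hb2)
    have hh2 : MemLp (fun ω => C *ᵥ (x ω - X) + D *ᵥ (v' ω - ∫ ω', v' ω' ∂μ)) 2 μ :=
      (aux_memℒp_mulVec C ha2).add (aux_memℒp_mulVec D hb2)
    exact (aux_integrable_dot hb2 (aux_memℒp_mulVec R hb2)).add
      ((aux_integrable_dot hg2 (aux_memℒp_mulVec Q hg2)).add
        (aux_integrable_dot hh2 (aux_memℒp_mulVec Q hh2)))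
  -- the central difference identity
  have hdiff : ∀ u' : Ω → Fin r → ℝ, Measurable[m] u' → MemLp u' 2 μ →
      (∀ᵐ ω ∂μ, S.mulVec (u' ω - ∫ ω', u' ω' ∂μ) = -(K.mulVec (x ω - X))) →
      (Sb.mulVec (∫ ω', u' ω' ∂μ) = -(Kb.mulVec X)) →
      ∀ v' : Ω → Fin r → ℝ, Measurable[m] v' → MemLp v' 2 μ →
      cost v' = cost u'
        + (∫ ω, (v' ω - u' ω - ((∫ ω', v' ω' ∂μ) - ∫ ω', u' ω' ∂μ)) ⬝ᵥ
            S *ᵥ (v' ω - u' ω - ((∫ ω', v' ω' ∂μ) - ∫ ω', u' ω' ∂μ)) ∂μ)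
        + ((∫ ω', v' ω' ∂μ) - ∫ ω', u' ω' ∂μ) ⬝ᵥ
            Sb *ᵥ ((∫ ω', v' ω' ∂μ) - ∫ ω', u' ω' ∂μ) := by
    intro u' hu'm hu'2 hflu hmeu v' hv'm hv'2
    have Kv := aux_key (m := m) A Abar C Cbar Q Qbar B D R hw2 hwindep hwmean hwvar
      hxmeas hx2 hv'm hv'2 (xplus v') (hxplus v')
    have Ku := aux_key (m := m) A Abar C Cbar Q Qbar B D R hw2 hwindep hwmean hwvar
      hxmeas hx2 hu'm hu'2 (xplus u') (hxplus u')
    rw [← hXdef] at Kv Ku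
    rw [hcost v', hcost u', Kv, Ku]
    have iv := intPhi v' hv'2
    have iu := intPhi u' hu'2
    -- fluctuation part identity (a.e.)
    have hae : (fun ω =>
        ((v' ω - ∫ ω', v' ω' ∂μ) ⬝ᵥ R *ᵥ (v' ω - ∫ ω', v' ω' ∂μ)
          + ((A *ᵥ (x ω - X) + B *ᵥ (v' ω - ∫ ω', v' ω' ∂μ)) ⬝ᵥ
              Q *ᵥ (A *ᵥ (x ω - X) + B *ᵥ (v' ω - ∫ ω', v' ω' ∂μ))
            + (C *ᵥ (x ω - X) + D *ᵥ (v' ω - ∫ ω', v' ω' ∂μ)) ⬝ᵥ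
              Q *ᵥ (C *ᵥ (x ω - X) + D *ᵥ (v' ω - ∫ ω', v' ω' ∂μ))))
        - ((u' ω - ∫ ω', u' ω' ∂μ) ⬝ᵥ R *ᵥ (u' ω - ∫ ω', u' ω' ∂μ)
          + ((A *ᵥ (x ω - X) + B *ᵥ (u' ω - ∫ ω', u' ω' ∂μ)) ⬝ᵥ
              Q *ᵥ (A *ᵥ (x ω - X) + B *ᵥ (u' ω - ∫ ω', u' ω' ∂μ))
            + (C *ᵥ (x ω - X) + D *ᵥ (u' ω - ∫ ω', u' ω' ∂μ)) ⬝ᵥ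
              Q *ᵥ (C *ᵥ (x ω - X) + D *ᵥ (u' ω - ∫ ω', u' ω' ∂μ)))))
        =ᵐ[μ] (fun ω => (v' ω - u' ω - ((∫ ω', v' ω' ∂μ) - ∫ ω', u' ω' ∂μ)) ⬝ᵥ
            S *ᵥ (v' ω - u' ω - ((∫ ω', v' ω' ∂μ) - ∫ ω', u' ω' ∂μ))) := by
      filter_upwards [hflu] with ω h
      have hq := aux_quad_diff Q Q R hQsym hQsym hRsym A C B D (x ω - X)
        (v' ω - ∫ ω', v' ω' ∂μ) (u' ω - ∫ ω', u' ω' ∂μ)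
      rw [← hSdef, ← hKdef, h, neg_add_cancel, dotProduct_zero, mul_zero, add_zero] at hq
      have hbb : (v' ω - ∫ ω', v' ω' ∂μ) - (u' ω - ∫ ω', u' ω' ∂μ)
          = v' ω - u' ω - ((∫ ω', v' ω' ∂μ) - ∫ ω', u' ω' ∂μ) := by abel
      rw [hbb] at hq
      exact hq
    have e0 := integral_sub iv iu
    have e1 := integral_congr_ae hae
    -- mean part identity
    have hq2 := aux_quad_diff (Q + Qbar) Q R hQQsym hQsym hRsym (A + Abar) (C + Cbar) B D X
      (∫ ω', v' ω' ∂μ) (∫ ω', u' ω' ∂μ)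
    rw [← hSbdef, ← hKbdef, hmeu, neg_add_cancel, dotProduct_zero, mul_zero, add_zero] at hq2
    linarith [e0, e1, hq2]
  -- the explicit optimal control
  set u₀ : Ω → Fin r → ℝ := fun ω => (-(S⁻¹ * K)) *ᵥ (x ω - X) + (-(Sb⁻¹ * Kb)) *ᵥ X with hu₀def
  have hu₀m : Measurable[m] u₀ := (aux_meas_mulVec _ ham).add measurable_const
  have hu₀2 : MemLp u₀ 2 μ := (aux_memℒp_mulVec _ ha2).add (memLp_const _)
  have hu₀I : Integrable u₀ μ := hu₀2.integrable one_le_two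
  have hu₀mean : ∫ ω', u₀ ω' ∂μ = (-(Sb⁻¹ * Kb)) *ᵥ X := by
    rw [hu₀def]
    rw [integral_add ((aux_memℒp_mulVec _ ha2).integrable one_le_two) (integrable_const _),
      aux_integral_mulVec _ haI, hamean, Matrix.mulVec_zero, zero_add, hconstint]
  have hScancel : S * (S⁻¹ * K) = K := by
    rw [← Matrix.mul_assoc, Matrix.mul_nonsing_inv S hSdet, Matrix.one_mul]
  have hSbcancel : Sb * (Sb⁻¹ * Kb) = Kb := by
    rw [← Matrix.mul_assoc, Matrix.mul_nonsing_inv Sb hSbdet, Matrix.one_mul]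
  have hu₀fl : ∀ ω, S.mulVec (u₀ ω - ∫ ω', u₀ ω' ∂μ) = -(K.mulVec (x ω - X)) := by
    intro ω
    rw [hu₀mean, hu₀def]
    have : (-(S⁻¹ * K)) *ᵥ (x ω - X) + (-(Sb⁻¹ * Kb)) *ᵥ X - (-(Sb⁻¹ * Kb)) *ᵥ X
        = (-(S⁻¹ * K)) *ᵥ (x ω - X) := by abel
    rw [this, Matrix.mulVec_mulVec, Matrix.mul_neg, hScancel, Matrix.neg_mulVec]
  have hu₀me : Sb.mulVec (∫ ω', u₀ ω' ∂μ) = -(Kb.mulVec X) := by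
    rw [hu₀mean, Matrix.mulVec_mulVec, Matrix.mul_neg, hSbcancel, Matrix.neg_mulVec]
  constructor
  · -- optimality implies the equations
    intro hopt
    have hle : cost u ≤ cost u₀ := hopt u₀ ((hAdm u₀).mpr ⟨hu₀m, hu₀2⟩)
    have heq := hdiff u₀ hu₀m hu₀2 (Filter.Eventually.of_forall hu₀fl) hu₀me u hum hu2
    set T1 := ∫ ω, (u ω - u₀ ω - ((∫ ω', u ω' ∂μ) - ∫ ω', u₀ ω' ∂μ)) ⬝ᵥ
        S *ᵥ (u ω - u₀ ω - ((∫ ω', u ω' ∂μ) - ∫ ω', u₀ ω' ∂μ)) ∂μ with hT1def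
    set T2 := ((∫ ω', u ω' ∂μ) - ∫ ω', u₀ ω' ∂μ) ⬝ᵥ
        Sb *ᵥ ((∫ ω', u ω' ∂μ) - ∫ ω', u₀ ω' ∂μ) with hT2def
    have hT1nn : 0 ≤ T1 := integral_nonneg fun ω => hquadS _
    have hT2nn : 0 ≤ T2 := hquadSb _
    have hT1z : T1 = 0 := by linarith
    have hT2z : T2 = 0 := by linarith
    -- mean equality
    have hmeq : (∫ ω', u ω' ∂μ) = ∫ ω', u₀ ω' ∂μ := by
      have := hquadSbzero _ hT2z
      exact sub_eq_zero.mp this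
    -- fluctuation a.e. equality
    have hgg2 : MemLp (fun ω => u ω - u₀ ω - ((∫ ω', u ω' ∂μ) - ∫ ω', u₀ ω' ∂μ)) 2 μ :=
      (hu2.sub hu₀2).sub (memLp_const _)
    have hggI : Integrable (fun ω => (u ω - u₀ ω - ((∫ ω', u ω' ∂μ) - ∫ ω', u₀ ω' ∂μ)) ⬝ᵥ
        S *ᵥ (u ω - u₀ ω - ((∫ ω', u ω' ∂μ) - ∫ ω', u₀ ω' ∂μ))) μ :=
      aux_integrable_dot hgg2 (aux_memℒp_mulVec S hgg2)
    have hzae := (integral_eq_zero_iff_of_nonneg_ae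
      (Filter.Eventually.of_forall fun ω => hquadS _) hggI).mp hT1z
    refine ⟨?_, ?_⟩
    · -- fluctuation equation
      filter_upwards [hzae] with ω hz
      have hg0 : u ω - u₀ ω - ((∫ ω', u ω' ∂μ) - ∫ ω', u₀ ω' ∂μ) = 0 := hquadSzero _ hz
      rw [hmeq] at hg0 ⊢
      have hu' : u ω - ∫ ω', u₀ ω' ∂μ = u₀ ω - ∫ ω', u₀ ω' ∂μ := by
        have : u ω = u₀ ω := by
          have h' : u ω - u₀ ω = 0 := by
            have : (∫ ω', u₀ ω' ∂μ) - ∫ ω', u₀ ω' ∂μ = (0 : Fin r → ℝ) := sub_self _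
            rw [this, sub_zero] at hg0; exact hg0
          exact sub_eq_zero.mp h'
        rw [this]
      rw [hu']
      exact hu₀fl ω
    · -- mean equation
      rw [hmeq]
      exact hu₀me
  · -- the equations imply optimality
    rintro ⟨hfl, hme⟩ v hv
    obtain ⟨hvm, hv2⟩ := (hAdm v).mp hv
    have heq := hdiff u hum hu2 hfl hme v hvm hv2
    have hT1nn : 0 ≤ ∫ ω, (v ω - u ω - ((∫ ω', v ω' ∂μ) - ∫ ω', u ω' ∂μ)) ⬝ᵥ
        S *ᵥ (v ω - u ω - ((∫ ω', v ω' ∂μ) - ∫ ω', u ω' ∂μ)) ∂μ :=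
      integral_nonneg fun ω => hquadS _
    have hT2nn : 0 ≤ ((∫ ω', v ω' ∂μ) - ∫ ω', u ω' ∂μ) ⬝ᵥ
        Sb *ᵥ ((∫ ω', v ω' ∂μ) - ∫ ω', u ω' ∂μ) := hquadSb _
    linarith
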